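/- (Inconsistency of the modified model on the boundary) There exist an integer d ≥ 2, a d×d real matrix C with c_{ij} ∈ [−1,1] for i ≠ j and c_{ii} ∈ [−1,0] for all i, an index r ∈ {1,…,d}, and a point x ∈ X with x_r = 0 and x_j > 0 for all j ≠ r, such that f_r(x) < 0 and ∑_{j ≠ r} f_j(x) ≠ 0. Consequently, the modified vector field that replaces f_r by 0 at such a point does not conserve the mass constraint ∑_j x_j = 1. -/
import Mathlib


open Matrix Finset

/-- Inconsistency of the modified model on the boundary: There
exist `d ≥ 2`, a matrix `C` with off-diagonal entries in `[-1,1]` and diagonal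
entries in `[-1,0]`, an index `r`, and a point `x ∈ X` with `x_r = 0` and all
other components positive, such that `f_r(x) < 0` and `∑_{j ≠ r} f_j(x) ≠ 0`;
hence the modified vector field replacing `f_r` by `0` there does not conserve
the mass constraint. -/
theorem modified_JK_model_inconsistent :
    ∃ (d : ℕ), 2 ≤ d ∧ ∃ (C : Matrix (Fin d) (Fin d) ℝ),
      (∀ i j, i ≠ j → C i j ∈ Set.Icc (-1 : ℝ) 1) ∧
      (∀ i, C i i ∈ Set.Icc (-1 : ℝ) 0) ∧
      ∃ (r : Fin d) (x : Fin d → ℝ),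
        (∀ j, 0 ≤ x j) ∧ (∑ j, x j) = 1 ∧
        x r = 0 ∧ (∀ j, j ≠ r → 0 < x j) ∧
        (C.mulVec x r - x r * ∑ k, C.mulVec x k) < 0 ∧
        (∑ j ∈ Finset.univ.erase r,
          (C.mulVec x j - x j * ∑ k, C.mulVec x k)) ≠ 0 := by
  refine ⟨2, le_refl 2, ![![0, -1], ![0, 0]], ?_, ?_, 0, ![0, 1], ?_, ?_, ?_, ?_, ?_, ?_⟩
  · intro i j hij
    fin_cases i <;> fin_cases j <;> simp_all <;> norm_num
  · intro i; fin_cases i <;> norm_num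
  · intro j; fin_cases j <;> norm_num
  · simp [Fin.sum_univ_two]
  · rfl
  · intro j hj
    fin_cases j
    · simp at hj
    · norm_num
  · simp [Matrix.mulVec, Fin.sum_univ_two, dotProduct]
  · rw [show (Finset.univ.erase (0 : Fin 2)) = {1} by decide]
    simp [Matrix.mulVec, Fin.sum_univ_two, dotProduct]
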